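/- Let d ≥ 2 be an integer, p > 1 and q ≥ 0 real numbers, and set ν = (q+1)(p−1)/p + 1. There exists a constant C > 0, depending only on d, p and q, such that for every continuously differentiable function u : ℝ^d → ℝ of the form u(x) = f(‖x‖) with f : [0,∞) → [0,∞) nonincreasing, satisfying ∫_{ℝ^d} |u|^{q+1} dx < ∞ and ∫_{ℝ^d} ‖∇u(x)‖^p dx < ∞, and for every x ∈ ℝ^d with x ≠ 0, one has u(x) ≤ C · ‖x‖^{(1−d)/ν} · (∫_{ℝ^d} |u|^{q+1} dx)^{(ν−1)/(ν(q+1))} · (∫_{ℝ^d} ‖∇u(x)‖^p dx)^{1/(ν p)}. -/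

import Mathlib

open Filter Set Topology MeasureTheory
open Metric

lemma polar {d : ℕ} (hd : 2 ≤ d) (g : ℝ → ℝ) :
    ∫ x : EuclideanSpace ℝ (Fin d), g ‖x‖ =
      ((d : ℝ) * (volume (ball (0:EuclideanSpace ℝ (Fin d)) 1)).toReal) *
        ∫ s in Ioi (0:ℝ), s ^ (d-1) * g s := by
  haveI : Nonempty (Fin d) := ⟨⟨0, by omega⟩⟩
  haveI : Nontrivial (EuclideanSpace ℝ (Fin d)) := by
    unfold EuclideanSpace; infer_instance
  rw [integral_fun_norm_addHaar volume g]
  simp only [finrank_euclideanSpace_fin, nsmul_eq_mul, smul_eq_mul, mul_assoc]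
  rfl

lemma memLp_cont_Ioc {g : ℝ → ℝ} (hg : Continuous g) (r R : ℝ) (e : ENNReal) :
    MemLp g e (volume.restrict (Ioc r R)) := by
  haveI : IsFiniteMeasure (volume.restrict (Ioc r R)) :=
    ⟨by rw [Measure.restrict_apply_univ]; exact measure_Ioc_lt_top⟩
  obtain ⟨M, hM⟩ := isCompact_Icc.exists_bound_of_continuousOn (hg.continuousOn (s := Icc r R))
  refine MemLp.of_bound hg.aestronglyMeasurable.restrict M ?_
  filter_upwards [ae_restrict_mem measurableSet_Ioc] with s hs
  exact hM s (Ioc_subset_Icc_self hs)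

lemma shell_bound {d : ℕ} (hd : 2 ≤ d) {r R : ℝ} (hr : 0 < r) {g : ℝ → ℝ}
    (hg : Continuous g) (hgnn : ∀ s ∈ Ioc r R, 0 ≤ g s)
    {h : EuclideanSpace ℝ (Fin d) → ℝ} (hh : Integrable h) (hhnn : ∀ y, 0 ≤ h y)
    (hhg : ∀ y : EuclideanSpace ℝ (Fin d), ‖y‖ ∈ Ioc r R → g ‖y‖ ≤ h y) :
    ((d : ℝ) * (volume (ball (0:EuclideanSpace ℝ (Fin d)) 1)).toReal) *
      ∫ s in Ioc r R, s ^ (d-1) * g s ≤ ∫ y, h y := by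
  set gt : ℝ → ℝ := (Ioc r R).indicator g with hgt
  have key : ∫ x : EuclideanSpace ℝ (Fin d), gt ‖x‖ =
      ((d : ℝ) * (volume (ball (0:EuclideanSpace ℝ (Fin d)) 1)).toReal) *
        ∫ s in Ioc r R, s ^ (d-1) * g s := by
    rw [polar hd gt]
    congr 1
    have e1 : ∀ s : ℝ, s ^ (d-1) * gt s =
        (Ioc r R).indicator (fun s => s ^ (d-1) * g s) s := by
      intro s
      simp only [hgt, Set.indicator_apply]
      split_ifs <;> simp
    rw [show (fun s : ℝ => s ^ (d-1) * gt s) = (Ioc r R).indicator (fun s => s ^ (d-1) * g s)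
        from funext e1]
    rw [setIntegral_indicator measurableSet_Ioc]
    rw [show Ioi (0:ℝ) ∩ Ioc r R = Ioc r R from
      inter_eq_self_of_subset_right (fun s hs => hr.trans hs.1)]
  rw [← key]
  have hmeas : AEStronglyMeasurable (fun y : EuclideanSpace ℝ (Fin d) => gt ‖y‖) volume := by
    have : (fun y : EuclideanSpace ℝ (Fin d) => gt ‖y‖) =
        (norm ⁻¹' (Ioc r R)).indicator (fun y => g ‖y‖) := by
      ext y
      by_cases hy : ‖y‖ ∈ Ioc r R
      · rw [hgt, Set.indicator_of_mem hy, Set.indicator_of_mem (by exact hy)]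
      · rw [hgt, Set.indicator_of_notMem hy, Set.indicator_of_notMem (by exact hy)]
    rw [this]
    exact (((hg.measurable.comp measurable_norm).indicator
      (continuous_norm.measurable measurableSet_Ioc))).aestronglyMeasurable
  have hle : ∀ y : EuclideanSpace ℝ (Fin d), gt ‖y‖ ≤ h y := by
    intro y
    by_cases hy : ‖y‖ ∈ Ioc r R
    · rw [hgt, Set.indicator_of_mem hy]; exact hhg y hy
    · rw [hgt, Set.indicator_of_notMem hy]; exact hhnn y
  have hint : Integrable (fun y : EuclideanSpace ℝ (Fin d) => gt ‖y‖) := by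
    refine hh.mono hmeas (Filter.Eventually.of_forall fun y => ?_)
    rw [Real.norm_of_nonneg, Real.norm_of_nonneg (hhnn y)]
    · exact hle y
    · by_cases hy : ‖y‖ ∈ Ioc r R
      · rw [hgt, Set.indicator_of_mem hy]; exact hgnn _ hy
      · rw [hgt, Set.indicator_of_notMem hy]
  exact integral_mono hint hh hle

/-- Modified Strauss radial inequality: a pointwise polynomial decay
bound for nonnegative, radially nonincreasing `C¹` functions on ℝ^d (`d ≥ 2`) in
terms of their `L^{q+1}` norm and the `L^p` norm of their gradient. -/
theorem stmt19 (d : ℕ) (hd : 2 ≤ d) (p q ν : ℝ) (hp : 1 < p) (hq : 0 ≤ q)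
    (hν : ν = (q + 1) * (p - 1) / p + 1) :
    ∃ C : ℝ, 0 < C ∧
      ∀ u : EuclideanSpace ℝ (Fin d) → ℝ, ContDiff ℝ 1 u →
        (∃ f : ℝ → ℝ, (∀ r, 0 ≤ r → 0 ≤ f r) ∧ AntitoneOn f (Set.Ici 0) ∧
          ∀ x, u x = f ‖x‖) →
        Integrable (fun x => |u x| ^ (q + 1)) →
        Integrable (fun x => ‖fderiv ℝ u x‖ ^ p) →
        ∀ x : EuclideanSpace ℝ (Fin d), x ≠ 0 →
          u x ≤ C * ‖x‖ ^ ((1 - (d : ℝ)) / ν) *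
            (∫ y, |u y| ^ (q + 1)) ^ ((ν - 1) / (ν * (q + 1))) *
            (∫ y, ‖fderiv ℝ u y‖ ^ p) ^ (1 / (ν * p)) := by
  have hp0 : (0:ℝ) < p := by linarith
  have hq1 : (0:ℝ) < q + 1 := by linarith
  have hν1 : 1 < ν := by
    rw [hν]
    have : 0 < (q + 1) * (p - 1) / p := div_pos (mul_pos hq1 (by linarith)) hp0
    linarith
  have hν0 : (0:ℝ) < ν := by linarith
  set p' : ℝ := p / (p - 1) with hp'def
  have hpq : p'.HolderConjugate p := (Real.HolderConjugate.conjExponent hp).symm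
  have hp'0 : (0:ℝ) < p' := hpq.pos
  have hνp' : (ν - 1) * p' = q + 1 := by
    rw [hν, hp'def]
    field_simp
    rw [add_sub_cancel_right, mul_div_assoc, div_self (by linarith : p - 1 ≠ 0), mul_one]
  set b : ℝ := (volume (ball (0:EuclideanSpace ℝ (Fin d)) 1)).toReal with hbdef
  have hb : 0 < b := by
    rw [hbdef]
    refine ENNReal.toReal_pos (ne_of_gt (measure_ball_pos _ _ one_pos)) ?_
    exact measure_ball_lt_top.ne
  set c : ℝ := (d:ℝ) * b with hcdef
  have hc : 0 < c := by
    rw [hcdef]; positivity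
  refine ⟨(ν / c) ^ (ν⁻¹), Real.rpow_pos_of_pos (by positivity) _, ?_⟩
  intro u hu ⟨f, hf0, hfa, hfu⟩ hA hB x hx
  set A : ℝ := ∫ y, |u y| ^ (q + 1) with hAdef
  set B : ℝ := ∫ y, ‖fderiv ℝ u y‖ ^ p with hBdef
  have hA0 : 0 ≤ A := integral_nonneg fun y => Real.rpow_nonneg (abs_nonneg _) _
  have hB0 : 0 ≤ B := integral_nonneg fun y => Real.rpow_nonneg (norm_nonneg _) _
  set r : ℝ := ‖x‖ with hrdef
  have hr : 0 < r := norm_pos_iff.2 hx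
  set v : EuclideanSpace ℝ (Fin d) := r⁻¹ • x with hvdef
  have hv : ‖v‖ = 1 := by
    rw [hvdef, norm_smul, norm_inv, norm_norm, ← hrdef, inv_mul_cancel₀ hr.ne']
  set F : ℝ → ℝ := fun s => u (s • v) with hFdef
  have hFf : ∀ s : ℝ, 0 ≤ s → F s = f s := by
    intro s hs
    rw [hFdef]
    simp only
    rw [hfu, norm_smul, hv, mul_one, Real.norm_of_nonneg hs]
  have hF0 : ∀ s : ℝ, 0 ≤ s → 0 ≤ F s := fun s hs => (hFf s hs).symm ▸ hf0 s hs
  have hFc : Continuous F := hu.continuous.comp (continuous_id.smul continuous_const)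
  set F' : ℝ → ℝ := fun s => (fderiv ℝ u (s • v)) v with hF'def
  have hFd : ∀ s : ℝ, HasDerivAt F (F' s) s := by
    intro s
    have h1 : HasDerivAt (fun t : ℝ => t • v) ((1:ℝ) • v) s := (hasDerivAt_id s).smul_const v
    have h2 : HasFDerivAt u (fderiv ℝ u (s • v)) (s • v) :=
      (hu.differentiable one_ne_zero).differentiableAt.hasFDerivAt
    have h3 := h2.comp_hasDerivAt s h1
    rw [one_smul] at h3
    exact h3
  have hF'c : Continuous F' := by
    exact ((hu.continuous_fderiv one_ne_zero).comp
      (continuous_id.smul continuous_const)).clm_apply continuous_const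
  -- derivative along any ray bounds
  have hray : ∀ y : EuclideanSpace ℝ (Fin d), 0 < ‖y‖ → |F' ‖y‖| ≤ ‖fderiv ℝ u y‖ := by
    intro y hy
    set w : EuclideanSpace ℝ (Fin d) := ‖y‖⁻¹ • y with hwdef
    have hw : ‖w‖ = 1 := by
      rw [hwdef, norm_smul, norm_inv, norm_norm, inv_mul_cancel₀ hy.ne']
    have hyw : ‖y‖ • w = y := by
      rw [hwdef, smul_smul, mul_inv_cancel₀ hy.ne', one_smul]
    have hGd : HasDerivAt (fun s : ℝ => u (s • w)) ((fderiv ℝ u (‖y‖ • w)) w) ‖y‖ := by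
      have h1 : HasDerivAt (fun t : ℝ => t • w) ((1:ℝ) • w) ‖y‖ := (hasDerivAt_id _).smul_const w
      have h2 : HasFDerivAt u (fderiv ℝ u (‖y‖ • w)) (‖y‖ • w) :=
        (hu.differentiable one_ne_zero).differentiableAt.hasFDerivAt
      have h3 := h2.comp_hasDerivAt ‖y‖ h1
      rw [one_smul] at h3
      exact h3
    have heq : F =ᶠ[nhds ‖y‖] (fun s : ℝ => u (s • w)) := by
      filter_upwards [Ioi_mem_nhds hy] with s hs
      have h1 : u (s • w) = f s := by
        rw [hfu, norm_smul, hw, mul_one, Real.norm_of_nonneg (le_of_lt hs)]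
      rw [h1, hFf s (le_of_lt hs)]
    have hFd2 : HasDerivAt F ((fderiv ℝ u (‖y‖ • w)) w) ‖y‖ :=
      hGd.congr_of_eventuallyEq heq
    have huniq : F' ‖y‖ = (fderiv ℝ u (‖y‖ • w)) w := (hFd ‖y‖).unique hFd2
    rw [huniq, hyw]
    calc |(fderiv ℝ u y) w| ≤ ‖fderiv ℝ u y‖ * ‖w‖ := (fderiv ℝ u y).le_opNorm w
    _ = ‖fderiv ℝ u y‖ := by rw [hw, mul_one]
  -- decay at infinity
  have hfνtend : Tendsto (fun R => f R ^ ν) atTop (nhds 0) := by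
    haveI : Nonempty (Fin d) := ⟨⟨0, by omega⟩⟩
    haveI : Nontrivial (EuclideanSpace ℝ (Fin d)) := by unfold EuclideanSpace; infer_instance
    have hballR : ∀ R : ℝ, 0 ≤ R →
        (volume (ball (0:EuclideanSpace ℝ (Fin d)) R)).toReal = R ^ d * b := by
      intro R hR
      rw [Measure.addHaar_ball volume 0 hR, ENNReal.toReal_mul,
        ENNReal.toReal_ofReal (by positivity), finrank_euclideanSpace_fin, hbdef]
    have hfb : ∀ R : ℝ, 0 < R → f R ≤ ((A / b) / R ^ d) ^ (1/(q+1)) := by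
      intro R hR
      have h1 : ∫ _y in ball (0:EuclideanSpace ℝ (Fin d)) R, f R ^ (q+1) ≤
          ∫ y in ball (0:EuclideanSpace ℝ (Fin d)) R, |u y| ^ (q+1) := by
        refine setIntegral_mono_on (integrableOn_const measure_ball_lt_top.ne)
          hA.integrableOn measurableSet_ball ?_
        intro y hy
        rw [mem_ball_zero_iff] at hy
        have h2 : f R ≤ |u y| := by
          rw [hfu, abs_of_nonneg (hf0 _ (norm_nonneg _))]
          exact hfa (mem_Ici.2 (norm_nonneg y)) (mem_Ici.2 hR.le) hy.le
        exact Real.rpow_le_rpow (hf0 R hR.le) h2 hq1.le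
      have h3 : ∫ y in ball (0:EuclideanSpace ℝ (Fin d)) R, |u y| ^ (q+1) ≤ A :=
        setIntegral_le_integral hA
          (Filter.Eventually.of_forall fun y => Real.rpow_nonneg (abs_nonneg _) _)
      rw [setIntegral_const, smul_eq_mul, measureReal_def, hballR R hR.le] at h1
      have h5 : f R ^ (q+1) ≤ (A / b) / R ^ d := by
        rw [div_div, le_div_iff₀ (by positivity)]
        nlinarith
      calc f R = (f R ^ (q+1)) ^ (1/(q+1)) := by
            rw [one_div]; exact (Real.rpow_rpow_inv (hf0 R hR.le) hq1.ne').symm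
      _ ≤ ((A/b)/R^d) ^ (1/(q+1)) :=
            Real.rpow_le_rpow (Real.rpow_nonneg (hf0 R hR.le) _) h5 (by positivity)
    have h6 : Tendsto (fun R : ℝ => ((A/b)/R^d) ^ (1/(q+1))) atTop (nhds 0) := by
      have h7 : Tendsto (fun R : ℝ => (A/b)/R^d) atTop (nhds 0) :=
        tendsto_const_nhds.div_atTop (tendsto_pow_atTop (by omega))
      have h8 : Tendsto (fun t : ℝ => t ^ (1/(q+1))) (nhds 0) (nhds 0) := by
        have h9 := (Real.continuousAt_rpow_const 0 (1/(q+1)) (Or.inr (by positivity))).tendsto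
        rwa [Real.zero_rpow (by positivity : (0:ℝ) < 1/(q+1)).ne'] at h9
      exact h8.comp h7
    have hft : Tendsto f atTop (nhds 0) := by
      apply tendsto_of_tendsto_of_tendsto_of_le_of_le' tendsto_const_nhds h6
      · filter_upwards [eventually_ge_atTop (0:ℝ)] with R hR
        exact hf0 R hR
      · filter_upwards [eventually_gt_atTop (0:ℝ)] with R hR
        exact hfb R hR
    have h10 : Tendsto (fun t : ℝ => t ^ ν) (nhds 0) (nhds 0) := by
      have h11 := (Real.continuousAt_rpow_const 0 ν (Or.inr hν0.le)).tendsto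
      rwa [Real.zero_rpow hν0.ne'] at h11
    exact h10.comp hft
  -- the key estimate
  have key : ∀ R : ℝ, r ≤ R →
      f r ^ ν * r ^ (d-1) ≤ f R ^ ν * r ^ (d-1) +
        ν * ((A/c) ^ (1/p') * (B/c) ^ (1/p)) := by
    intro R hrR
    have hR0 : 0 < R := lt_of_lt_of_le hr hrR
    set G' : ℝ → ℝ := fun s => ν * F s ^ (ν-1) * F' s with hG'def
    have hGd : ∀ s : ℝ, HasDerivAt (fun t => F t ^ ν) (G' s) s := by
      intro s
      have h1 := Real.hasDerivAt_rpow_const (x := F s) (p := ν) (Or.inr hν1.le)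
      exact h1.comp s (hFd s)
    have hFν : Continuous fun s => F s ^ (ν-1) :=
      hFc.rpow_const fun s => Or.inr (by linarith)
    have hG'c : Continuous G' := (continuous_const.mul hFν).mul hF'c
    have hFTC : ∫ s in r..R, G' s = F R ^ ν - F r ^ ν :=
      intervalIntegral.integral_eq_sub_of_hasDerivAt (fun s _ => hGd s)
        (hG'c.intervalIntegrable r R)
    have hIoc : ∫ s in Ioc r R, G' s = F R ^ ν - F r ^ ν := by
      rw [← intervalIntegral.integral_of_le hrR, hFTC]
    have h2 : ∫ s in Ioc r R, (-(G' s)) * r ^ (d-1) ≤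
        ∫ s in Ioc r R, ν * ((F s ^ (ν-1) * |F' s|) * s ^ (d-1)) := by
      refine setIntegral_mono_on ?_ ?_ measurableSet_Ioc ?_
      · exact ((hG'c.neg.mul continuous_const)).integrableOn_Ioc
      · exact (continuous_const.mul ((hFν.mul hF'c.abs).mul (continuous_pow _))).integrableOn_Ioc
      · intro s hs
        have hs0 : 0 < s := hr.trans hs.1
        have hFs : 0 ≤ F s ^ (ν-1) := Real.rpow_nonneg (hF0 s hs0.le) _
        have hrs : r ^ (d-1) ≤ s ^ (d-1) := pow_le_pow_left₀ hr.le hs.1.le _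
        have habs : -F' s ≤ |F' s| := neg_le_abs _
        have h3 : (-(G' s)) * r^(d-1) = (ν * F s ^ (ν-1)) * ((-F' s) * r ^ (d-1)) := by
          rw [hG'def]; ring
        rw [h3]
        have h4 : (-F' s) * r^(d-1) ≤ |F' s| * s^(d-1) := by
          calc (-F' s) * r^(d-1) ≤ |F' s| * r^(d-1) :=
                mul_le_mul_of_nonneg_right habs (by positivity)
          _ ≤ |F' s| * s^(d-1) := mul_le_mul_of_nonneg_left hrs (abs_nonneg _)
        calc (ν * F s ^ (ν-1)) * ((-F' s) * r^(d-1)) ≤ (ν * F s ^ (ν-1)) * (|F' s| * s^(d-1)) :=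
              mul_le_mul_of_nonneg_left h4 (by positivity)
        _ = ν * ((F s ^ (ν-1) * |F' s|) * s ^ (d-1)) := by ring
    have hcast : ((d-1:ℕ):ℝ) = (d:ℝ) - 1 := by
      have h1 : 1 ≤ d := by omega
      push_cast [Nat.cast_sub h1]
      ring
    have hold : ∫ s in Ioc r R, (F s ^ (ν-1) * |F' s|) * s ^ (d-1) ≤
        (A/c) ^ (1/p') * (B/c) ^ (1/p) := by
      set w1 : ℝ → ℝ := fun s => s ^ (((d:ℝ)-1)/p') with hw1def
      set w2 : ℝ → ℝ := fun s => s ^ (((d:ℝ)-1)/p) with hw2def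
      have hd1 : (0:ℝ) ≤ (d:ℝ)-1 := by
        have : (2:ℝ) ≤ d := by exact_mod_cast hd
        linarith
      have hw1c : Continuous w1 := continuous_iff_continuousAt.2 fun s =>
        Real.continuousAt_rpow_const s _ (Or.inr (by positivity))
      have hw2c : Continuous w2 := continuous_iff_continuousAt.2 fun s =>
        Real.continuousAt_rpow_const s _ (Or.inr (by positivity))
      set φ : ℝ → ℝ := fun s => F s ^ (ν-1) * w1 s with hφdef
      set ψ : ℝ → ℝ := fun s => |F' s| * w2 s with hψdef
      have hφc : Continuous φ := hFν.mul hw1c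
      have hψc : Continuous ψ := hF'c.abs.mul hw2c
      have hsd : ∀ s : ℝ, 0 < s → w1 s * w2 s = s ^ (d-1) := by
        intro s hs
        rw [hw1def, hw2def]
        simp only
        rw [← Real.rpow_add hs, ← Real.rpow_natCast s (d-1), hcast]
        congr 1
        rw [div_eq_mul_inv, div_eq_mul_inv, ← mul_add, hpq.inv_add_inv_eq_one, mul_one]
      have heqn : EqOn (fun s => (F s ^ (ν-1) * |F' s|) * s ^ (d-1))
          (fun s => φ s * ψ s) (Ioc r R) := by
        intro s hs
        have hs0 : 0 < s := hr.trans hs.1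
        simp only [hφdef, hψdef]
        rw [← hsd s hs0]
        ring
      rw [setIntegral_congr_fun measurableSet_Ioc heqn]
      have hnn1 : 0 ≤ᵐ[volume.restrict (Ioc r R)] φ := by
        filter_upwards [ae_restrict_mem measurableSet_Ioc] with s hs
        exact mul_nonneg (Real.rpow_nonneg (hF0 s (hr.trans hs.1).le) _)
          (Real.rpow_nonneg (hr.trans hs.1).le _)
      have hnn2 : 0 ≤ᵐ[volume.restrict (Ioc r R)] ψ := by
        filter_upwards [ae_restrict_mem measurableSet_Ioc] with s hs
        exact mul_nonneg (abs_nonneg _) (Real.rpow_nonneg (hr.trans hs.1).le _)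
      have hH := integral_mul_le_Lp_mul_Lq_of_nonneg hpq hnn1 hnn2
        (memLp_cont_Ioc hφc r R _) (memLp_cont_Ioc hψc r R _)
      refine hH.trans ?_
      have hI1eq : ∫ s in Ioc r R, φ s ^ p' = ∫ s in Ioc r R, s ^ (d-1) * F s ^ (q+1) := by
        refine setIntegral_congr_fun measurableSet_Ioc ?_
        intro s hs
        have hs0 : 0 < s := hr.trans hs.1
        simp only [hφdef, hw1def]
        rw [Real.mul_rpow (Real.rpow_nonneg (hF0 s hs0.le) _) (Real.rpow_nonneg hs0.le _),
          ← Real.rpow_natCast s (d-1), hcast,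
          ← Real.rpow_mul (hF0 s hs0.le), ← Real.rpow_mul hs0.le, hνp',
          div_mul_cancel₀ _ hpq.ne_zero]
        ring
      have hI2eq : ∫ s in Ioc r R, ψ s ^ p = ∫ s in Ioc r R, s ^ (d-1) * |F' s| ^ p := by
        refine setIntegral_congr_fun measurableSet_Ioc ?_
        intro s hs
        have hs0 : 0 < s := hr.trans hs.1
        simp only [hψdef, hw2def]
        rw [Real.mul_rpow (abs_nonneg _) (Real.rpow_nonneg hs0.le _),
          ← Real.rpow_natCast s (d-1), hcast,
          ← Real.rpow_mul hs0.le,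
          div_mul_cancel₀ _ hpq.symm.ne_zero]
        ring
      rw [hI1eq, hI2eq]
      have hI1 : ∫ s in Ioc r R, s^(d-1) * F s ^(q+1) ≤ A / c := by
        have hsb := shell_bound (R := R) hd hr (g := fun s => F s ^ (q+1))
          (hFc.rpow_const fun s => Or.inr hq1.le)
          (fun s hs => Real.rpow_nonneg (hF0 s (hr.trans hs.1).le) _)
          (h := fun y => |u y| ^ (q+1)) hA
          (fun y => Real.rpow_nonneg (abs_nonneg _) _)
          (fun y hy => le_of_eq (by
            show F ‖y‖ ^ (q+1) = |u y| ^ (q+1)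
            rw [hFf _ (norm_nonneg y), hfu, abs_of_nonneg (hf0 _ (norm_nonneg _))]))
        rw [le_div_iff₀ hc]
        calc (∫ s in Ioc r R, s^(d-1) * F s ^(q+1)) * c
            = c * ∫ s in Ioc r R, s^(d-1) * F s ^(q+1) := mul_comm _ _
        _ ≤ A := hsb
      have hI2 : ∫ s in Ioc r R, s^(d-1) * |F' s| ^ p ≤ B / c := by
        have hsb := shell_bound (R := R) hd hr (g := fun s => |F' s| ^ p)
          (hF'c.abs.rpow_const fun s => Or.inr hp0.le)
          (fun s hs => Real.rpow_nonneg (abs_nonneg _) _)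
          (h := fun y => ‖fderiv ℝ u y‖ ^ p) hB
          (fun y => Real.rpow_nonneg (norm_nonneg _) _)
          (fun y hy => Real.rpow_le_rpow (abs_nonneg _) (hray y (hr.trans hy.1)) hp0.le)
        rw [le_div_iff₀ hc]
        calc (∫ s in Ioc r R, s^(d-1) * |F' s| ^ p) * c
            = c * ∫ s in Ioc r R, s^(d-1) * |F' s| ^ p := mul_comm _ _
        _ ≤ B := hsb
      have hI1nn : 0 ≤ ∫ s in Ioc r R, s^(d-1) * F s^(q+1) :=
        setIntegral_nonneg measurableSet_Ioc fun s hs =>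
          mul_nonneg (pow_nonneg (hr.trans hs.1).le _) (Real.rpow_nonneg (hF0 s (hr.trans hs.1).le) _)
      have hI2nn : 0 ≤ ∫ s in Ioc r R, s^(d-1) * |F' s|^p :=
        setIntegral_nonneg measurableSet_Ioc fun s hs =>
          mul_nonneg (pow_nonneg (hr.trans hs.1).le _) (Real.rpow_nonneg (abs_nonneg _) _)
      exact mul_le_mul (Real.rpow_le_rpow hI1nn hI1 hpq.one_div_nonneg)
        (Real.rpow_le_rpow hI2nn hI2 hpq.symm.one_div_nonneg)
        (Real.rpow_nonneg hI2nn _)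
        (Real.rpow_nonneg (div_nonneg hA0 hc.le) _)
    have h5 : ∫ s in Ioc r R, (-(G' s)) * r ^ (d-1) = (F r ^ ν - F R ^ ν) * r ^ (d-1) := by
      rw [integral_mul_const, integral_neg, hIoc]
      ring
    have h6 : ∫ s in Ioc r R, ν * ((F s ^ (ν-1) * |F' s|) * s ^ (d-1)) =
        ν * ∫ s in Ioc r R, (F s ^ (ν-1) * |F' s|) * s ^ (d-1) := integral_const_mul _ _
    rw [h5, h6, hFf r hr.le, hFf R hR0.le] at h2
    have h7 : ν * ∫ s in Ioc r R, (F s ^ (ν-1) * |F' s|) * s ^ (d-1) ≤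
        ν * ((A/c) ^ (1/p') * (B/c) ^ (1/p)) := mul_le_mul_of_nonneg_left hold hν0.le
    rw [sub_mul] at h2
    linarith
  have hfin : f r ^ ν * r ^ (d-1) ≤ ν * ((A/c) ^ (1/p') * (B/c) ^ (1/p)) := by
    have htd : Tendsto (fun R => f R ^ ν * r ^ (d-1) +
        ν * ((A/c) ^ (1/p') * (B/c) ^ (1/p))) atTop
        (nhds (ν * ((A/c) ^ (1/p') * (B/c) ^ (1/p)))) := by
      have := (hfνtend.mul_const (r ^ (d-1))).add
        (tendsto_const_nhds (α := ℝ) (x := ν * ((A/c) ^ (1/p') * (B/c) ^ (1/p))) (f := atTop))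
      simpa using this
    exact ge_of_tendsto htd (Filter.eventually_atTop.2 ⟨r, fun R hR => key R hR⟩)
  -- final algebra
  have hcast : ((d-1:ℕ):ℝ) = (d:ℝ) - 1 := by
    have h1 : 1 ≤ d := by omega
    push_cast [Nat.cast_sub h1]
    ring
  set RHS : ℝ := (ν/c)^(ν⁻¹) * r ^ ((1-(d:ℝ))/ν) * A ^ ((ν-1)/(ν*(q+1))) * B ^ (1/(ν*p))
    with hRHSdef
  have hRHS0 : 0 ≤ RHS :=
    mul_nonneg (mul_nonneg (mul_nonneg (Real.rpow_nonneg (div_nonneg hν0.le hc.le) _)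
      (Real.rpow_nonneg hr.le _)) (Real.rpow_nonneg hA0 _)) (Real.rpow_nonneg hB0 _)
  have hν1' : ν - 1 ≠ 0 := by linarith
  have hep1 : (ν - 1) / (ν * (q + 1)) * ν = 1/p' := by
    rw [← hνp']
    field_simp
  have hep2 : 1/(ν*p)*ν = 1/p := by
    field_simp
  have hcc : c ^ (1/p') * c ^ (1/p) = c := by
    rw [one_div, one_div, ← Real.rpow_add hc, hpq.inv_add_inv_eq_one, Real.rpow_one]
  have hcomb : (A/c) ^ (1/p') * (B/c) ^ (1/p) = A ^ (1/p') * B ^ (1/p) / c := by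
    rw [Real.div_rpow hA0 hc.le, Real.div_rpow hB0 hc.le, div_mul_div_comm, hcc]
  have hRν : RHS ^ ν = ν * ((A/c) ^ (1/p') * (B/c) ^ (1/p)) / r ^ (d-1) := by
    rw [hRHSdef]
    rw [Real.mul_rpow (mul_nonneg (mul_nonneg (Real.rpow_nonneg (div_nonneg hν0.le hc.le) _)
        (Real.rpow_nonneg hr.le _)) (Real.rpow_nonneg hA0 _)) (Real.rpow_nonneg hB0 _),
      Real.mul_rpow (mul_nonneg (Real.rpow_nonneg (div_nonneg hν0.le hc.le) _)
        (Real.rpow_nonneg hr.le _)) (Real.rpow_nonneg hA0 _),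
      Real.mul_rpow (Real.rpow_nonneg (div_nonneg hν0.le hc.le) _) (Real.rpow_nonneg hr.le _)]
    rw [Real.rpow_inv_rpow (div_nonneg hν0.le hc.le) hν0.ne']
    rw [← Real.rpow_mul hr.le, div_mul_cancel₀ _ hν0.ne']
    rw [← Real.rpow_mul hA0, hep1, ← Real.rpow_mul hB0, hep2]
    rw [show (1-(d:ℝ)) = -((d:ℝ)-1) by ring, Real.rpow_neg hr.le,
      ← hcast, Real.rpow_natCast]
    rw [hcomb]
    ring
  have h1 : f r ^ ν ≤ RHS ^ ν := by
    rw [hRν, le_div_iff₀ (pow_pos hr _)]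
    exact hfin
  have h2 : f r ≤ RHS := by
    have h3 := Real.rpow_le_rpow (Real.rpow_nonneg (hf0 r hr.le) _) h1 (inv_nonneg.2 hν0.le)
    rwa [Real.rpow_rpow_inv (hf0 r hr.le) hν0.ne', Real.rpow_rpow_inv hRHS0 hν0.ne'] at h3
  calc u x = f r := by rw [hfu]
  _ ≤ RHS := h2
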